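/- Fix n ≥ 3 and 2 ≤ i ≤ n−1, and define w ∈ ℝ^n by: w_{i−1} = 1, w_i = 0, w_{i+1} = −1, w_{i−2} = (δ+ε)/(1+δ) (if i−2 ≥ 1), w_{i+2} = −(δ+ε)/(1+δ) (if i+2 ≤ n), and w_k = 0 for all other k. Then for every x ∈ ℝ^n whose output y := Wx + θ satisfies y_k ≤ 0 for all k ≠ i (i.e. x lies in the single-support cell C_{{i}}), the vector field of the CSTLN satisfies w^⊤(−x + [y]_+) = −(w^⊤ x). Consequently, along any solution of ẋ = −x + [Wx+θ]_+ remaining in C_{{i}}, the scalar φ(x) := w^⊤x obeys φ̇ = −φ. -/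

import Mathlib

open Matrix

/-- With `w` the left eigenvector of the triple-support-cell
Jacobian, for every `x` in the single-support cell `C_{i}` (i.e. `y_k ≤ 0` for
all `k ≠ i`) the CSTLN vector field satisfies `wᵀ(−x + [y]₊) = −(wᵀ x)`;
consequently along any solution remaining in `C_{i}`, `φ(x) = wᵀx` obeys
`φ̇ = −φ`. Indices are 0-based: `1 ≤ i` and `i + 1 < n` correspond to the
1-based statement `2 ≤ i ≤ n−1`. -/
theorem cstln_single_cell_eigcoordinate_decay (n i : ℕ) (hn : 3 ≤ n)
    (hi1 : 1 ≤ i) (hi2 : i + 1 < n)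
    (ε δ c : ℝ) (hε : 0 < ε) (hε1 : ε < 1) (hδ : 0 < δ) (hc : 0 < c)
    (W : Matrix (Fin n) (Fin n) ℝ)
    (hW : ∀ k l : Fin n, W k l =
      if (k : ℕ) = (l : ℕ) then 0
      else if ((k : ℤ) - (l : ℤ)).natAbs = 1 then -1 + ε else -1 - δ)
    (w : Fin n → ℝ)
    (hw : ∀ k : Fin n, w k =
      if (k : ℕ) = i - 1 then 1
      else if (k : ℕ) = i + 1 then -1
      else if (k : ℕ) + 2 = i then (δ + ε) / (1 + δ)
      else if (k : ℕ) = i + 2 then -((δ + ε) / (1 + δ))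
      else 0) :
    -- algebraic identity on the single-support cell C_{i}
    (∀ x : Fin n → ℝ,
      (∀ k : Fin n, (k : ℕ) ≠ i → W.mulVec x k + c ≤ 0) →
      (∑ j, w j * (-(x j) + max (W.mulVec x j + c) 0)) = -(∑ j, w j * x j)) ∧
    -- consequence along solutions of `ẋ = −x + [Wx + θ]₊` inside C_{i}
    (∀ (x : ℝ → Fin n → ℝ) (t : ℝ),
      (∀ j : Fin n, HasDerivAt (fun s => x s j)
        (-(x t j) + max (W.mulVec (x t) j + c) 0) t) →
      (∀ k : Fin n, (k : ℕ) ≠ i → W.mulVec (x t) k + c ≤ 0) →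
      HasDerivAt (fun s => ∑ j, w j * x s j) (-(∑ j, w j * x t j)) t) := by

  have key : ∀ x : Fin n → ℝ,
      (∀ k : Fin n, (k : ℕ) ≠ i → W.mulVec x k + c ≤ 0) →
      (∑ j, w j * (-(x j) + max (W.mulVec x j + c) 0)) = -(∑ j, w j * x j) := by
    intro x hx
    have term : ∀ j : Fin n, w j * (-(x j) + max (W.mulVec x j + c) 0)
        = -(w j * x j) := by
      intro j
      by_cases h : (j : ℕ) = i
      · have hw0 : w j = 0 := by
          rw [hw j, h]
          split_ifs <;> first | omega | rfl
        rw [hw0]; ring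
      · have hy : max (W.mulVec x j + c) 0 = 0 := max_eq_right (hx j h)
        rw [hy]; ring
    simp only [term]
    exact Finset.sum_neg_distrib (f := fun j => w j * x j)
  refine ⟨key, ?_⟩
  intro x t hderiv hx
  have hsum := HasDerivAt.fun_sum (fun j (_ : j ∈ Finset.univ) =>
    (hderiv j).const_mul (w j))
  rw [show (∑ j, w j * (-(x t j) + max (W.mulVec (x t) j + c) 0))
      = -(∑ j, w j * x t j) from key (x t) hx] at hsum
  exact hsum
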